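/- Let X₁ = Σ_{j=0}^{n-2}(|j⟩⟨j+1| + |j+1⟩⟨j|) on ℂⁿ and for t ∈ [0, 1/2] let Λ_t(X) = A_t ∘ X be the Schur (entrywise) product with A_t = I + t X₁ (entries 1 on diagonal, t on first off-diagonals). Then ‖Λ_t(X₁)‖₁ = 2t Σ_{k=1}^n |cos(kπ/(n+1))|, which is strictly increasing in t; hence the family {Λ_t} is not P-divisible. -/

import Mathlib

open Matrix
open scoped ComplexOrder

/-- Trace norm `‖A‖₁ = Tr √(Aᴴ A)` (finite-dimensional stand-in for the
trace norm on trace-class operators `B₁(H)`). -/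
noncomputable def traceNorm {ι : Type*} [Fintype ι] [DecidableEq ι]
    (A : Matrix ι ι ℂ) : ℝ :=
  (((Matrix.posSemidef_conjTranspose_mul_self A).1.eigenvectorUnitary : Matrix ι ι ℂ) *
      diagonal (fun i => ((Real.sqrt
        ((Matrix.posSemidef_conjTranspose_mul_self A).1.eigenvalues i) : ℝ) : ℂ)) *
      (star (Matrix.posSemidef_conjTranspose_mul_self A).1.eigenvectorUnitary :
        Matrix ι ι ℂ)).trace.re

/-- The tridiagonal Schur multiplier `A_t = I + t·X₁`. -/
noncomputable def schurA (n : ℕ) (t : ℝ) : Matrix (Fin n) (Fin n) ℂ :=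
  Matrix.of fun i j =>
    if i = j then 1
    else if (i : ℕ) + 1 = (j : ℕ) ∨ (j : ℕ) + 1 = (i : ℕ) then (t : ℂ) else 0

/-- The off-diagonal part `X₁`. -/
def schurX₁ (n : ℕ) : Matrix (Fin n) (Fin n) ℂ :=
  Matrix.of fun i j =>
    if (i : ℕ) + 1 = (j : ℕ) ∨ (j : ℕ) + 1 = (i : ℕ) then 1 else 0

section TrigAux


/-- telescoping cosine sum -/
lemma tele_sum (φ : ℝ) (N : ℕ) :
    ∑ j ∈ Finset.range N, 2 * Real.cos (j * φ) * Real.sin (φ/2)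
      = Real.sin (N * φ - φ/2) + Real.sin (φ/2) := by
  have h : ∀ j : ℕ, 2 * Real.cos (j * φ) * Real.sin (φ/2)
      = Real.sin ((j+1 : ℕ) * φ - φ/2) - Real.sin (j * φ - φ/2) := by
    intro j
    rw [Real.sin_sub_sin]
    push_cast
    ring_nf
  calc ∑ j ∈ Finset.range N, 2 * Real.cos (j * φ) * Real.sin (φ/2)
      = ∑ j ∈ Finset.range N,
          (Real.sin ((j+1 : ℕ) * φ - φ/2) - Real.sin (j * φ - φ/2)) := by
        exact Finset.sum_congr rfl fun j _ => h j
    _ = Real.sin (N * φ - φ/2) - Real.sin ((0:ℕ) * φ - φ/2) :=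
        Finset.sum_range_sub (fun j : ℕ => Real.sin (j * φ - φ/2)) N
    _ = Real.sin (N * φ - φ/2) + Real.sin (φ/2) := by
        simp [Real.sin_neg]

lemma cos_sum (n : ℕ) (m : ℕ) (hm : 0 < m) (hm2 : m < 2*(n+1)) :
    ∑ j ∈ Finset.range (n+1), Real.cos (j * (m * Real.pi / (n+1)))
      = if Even m then 0 else 1 := by
  set φ : ℝ := m * Real.pi / (n+1) with hφ
  have hn1 : (0:ℝ) < (n:ℝ)+1 := by positivity
  have hs : 0 < Real.sin (φ/2) := by
    apply Real.sin_pos_of_pos_of_lt_pi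
    · positivity
    · rw [hφ]
      rw [div_div, div_lt_iff₀ (by positivity)]
      calc (m:ℝ) * Real.pi < (2*(n+1) : ℕ) * Real.pi := by
            apply mul_lt_mul_of_pos_right _ Real.pi_pos
            exact_mod_cast hm2
        _ = Real.pi * (((n:ℝ)+1) * 2) := by push_cast; ring
  have key := tele_sum φ (n+1)
  have hend : ((n+1 : ℕ) : ℝ) * φ - φ/2 = m * Real.pi - φ/2 := by
    rw [hφ]; push_cast; field_simp
  rw [hend] at key
  have hsin : Real.sin (m * Real.pi - φ/2) = -((-1)^m * Real.sin (φ/2)) := by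
    have hc : Real.cos (m * Real.pi) = (-1)^m := by
      simpa using Real.cos_nat_mul_pi_sub 0 m
    rw [Real.sin_sub, Real.sin_nat_mul_pi, hc]
    ring
  rw [hsin] at key
  have h2 : (∑ j ∈ Finset.range (n+1), Real.cos (j * φ)) * (2 * Real.sin (φ/2))
      = (1 - (-1)^m) * Real.sin (φ/2) := by
    rw [Finset.sum_mul]
    calc ∑ j ∈ Finset.range (n+1), Real.cos (j*φ) * (2 * Real.sin (φ/2))
        = ∑ j ∈ Finset.range (n+1), 2 * Real.cos (j*φ) * Real.sin (φ/2) := by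
          apply Finset.sum_congr rfl; intros; ring
      _ = -((-1)^m * Real.sin (φ/2)) + Real.sin (φ/2) := key
      _ = (1 - (-1)^m) * Real.sin (φ/2) := by ring
  have h3 : ∑ j ∈ Finset.range (n+1), Real.cos (j * φ) = (1 - (-1)^m)/2 := by
    have hs' : Real.sin (φ/2) ≠ 0 := ne_of_gt hs
    field_simp at h2 ⊢
    linarith [h2, show ∑ x ∈ Finset.range (n+1), Real.cos (φ * (x:ℝ)) = ∑ x ∈ Finset.range (n+1), Real.cos ((x:ℝ) * φ) from Finset.sum_congr rfl fun x _ => by rw [mul_comm]]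
  rw [h3]
  rcases Nat.even_or_odd m with he | ho
  · rw [if_pos he, he.neg_one_pow]; ring
  · rw [if_neg (Nat.not_even_iff_odd.mpr ho), ho.neg_one_pow]; ring



lemma cos_sum' (n : ℕ) (m : ℕ) (hm2 : m < 2*(n+1)) :
    ∑ j ∈ Finset.range n, Real.cos (((j:ℝ)+1) * (m * Real.pi / (n+1)))
      = if m = 0 then (n:ℝ) else (if Even m then 0 else 1) - 1 := by
  rcases Nat.eq_zero_or_pos m with h0 | hm
  · subst h0
    simp
  · rw [if_neg hm.ne']
    have := cos_sum n m hm hm2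
    rw [Finset.sum_range_succ' (fun j : ℕ => Real.cos (j * (m * Real.pi / (n+1)))) n] at this
    simp only [Nat.cast_add, Nat.cast_one, Nat.cast_zero, zero_mul, Real.cos_zero] at this
    linarith [this]

lemma ortho_aux (n : ℕ) (a b : ℕ) (ha : a < n) (hb : b < n) (hba : b ≤ a) :
    ∑ j ∈ Finset.range n,
      Real.sin (((j:ℝ)+1)*(((a:ℝ)+1)*Real.pi/((n:ℝ)+1)))
        * Real.sin (((j:ℝ)+1)*(((b:ℝ)+1)*Real.pi/((n:ℝ)+1)))
      = if a = b then ((n:ℝ)+1)/2 else 0 := by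
  have hprod : ∀ x y : ℝ, Real.sin x * Real.sin y
      = (Real.cos (x-y) - Real.cos (x+y))/2 := by
    intro x y
    rw [Real.cos_sub_cos,
      show (x - y + (x+y))/2 = x by ring,
      show (x - y - (x+y))/2 = -y by ring, Real.sin_neg]
    ring
  have hstep : ∀ j : ℕ,
      Real.sin (((j:ℝ)+1)*(((a:ℝ)+1)*Real.pi/((n:ℝ)+1)))
        * Real.sin (((j:ℝ)+1)*(((b:ℝ)+1)*Real.pi/((n:ℝ)+1)))
      = (Real.cos (((j:ℝ)+1) * (((a-b : ℕ):ℝ) * Real.pi / ((n:ℝ)+1)))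
          - Real.cos (((j:ℝ)+1) * (((a+b+2 : ℕ):ℝ) * Real.pi / ((n:ℝ)+1))))/2 := by
    intro j
    rw [hprod]
    congr 2
    · rw [Nat.cast_sub hba]; ring
    · push_cast; ring
  rw [Finset.sum_congr rfl fun j _ => hstep j]
  rw [← Finset.sum_div, Finset.sum_sub_distrib]
  have h2 : (a+b+2) < 2*(n+1) := by omega
  have B := cos_sum' n (a+b+2) h2
  have h1 : (a-b) < 2*(n+1) := by omega
  have A := cos_sum' n (a-b) h1
  rw [A, B]
  have hpar : (Even (a-b)) ↔ Even (a+b+2) := by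
    rw [Nat.even_sub hba, Nat.even_add_one, Nat.even_add_one, Nat.even_add]
    tauto
  by_cases hab : a = b
  · subst hab
    have hev : Even (a+a+2) := ⟨a+1, by ring⟩
    rw [if_pos rfl, if_pos (Nat.sub_self a),
      if_neg (by omega : ¬ (a+a+2 = 0)), if_pos hev]
    ring
  · rw [if_neg hab, if_neg (by omega : ¬ (a - b = 0)),
      if_neg (by omega : ¬ (a+b+2 = 0))]
    by_cases he : Even (a-b)
    · rw [if_pos he, if_pos (hpar.mp he)]; ring
    · rw [if_neg he, if_neg (fun h => he (hpar.mpr h))]; ring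

lemma ortho (n : ℕ) (a b : ℕ) (ha : a < n) (hb : b < n) :
    ∑ j ∈ Finset.range n,
      Real.sin (((j:ℝ)+1)*(((a:ℝ)+1)*Real.pi/((n:ℝ)+1)))
        * Real.sin (((j:ℝ)+1)*(((b:ℝ)+1)*Real.pi/((n:ℝ)+1)))
      = if a = b then ((n:ℝ)+1)/2 else 0 := by
  rcases le_total b a with h | h
  · exact ortho_aux n a b ha hb h
  · have := ortho_aux n b a hb ha h
    rw [Finset.sum_congr rfl (fun j _ => mul_comm _ _)] at this
    rw [this]
    by_cases hab : a = b
    · rw [if_pos hab, if_pos hab.symm]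
    · rw [if_neg hab, if_neg (fun h' => hab h'.symm)]

lemma eig (θ : ℝ) (j : ℕ) :
    Real.sin ((j:ℝ)*θ) + Real.sin (((j:ℝ)+2)*θ)
      = 2*Real.cos θ * Real.sin (((j:ℝ)+1)*θ) := by
  rw [show ((j:ℝ))*θ = ((j:ℝ)+1)*θ - θ by ring,
    show ((j:ℝ)+2)*θ = ((j:ℝ)+1)*θ + θ by ring, Real.sin_sub, Real.sin_add]
  ring

end TrigAux

namespace SchurAux

noncomputable def θ (n : ℕ) (k : ℕ) : ℝ := ((k:ℝ)+1) * Real.pi / ((n:ℝ)+1)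

noncomputable def S₀ (n : ℕ) : Matrix (Fin n) (Fin n) ℝ :=
  Matrix.of fun j k => Real.sin (((j:ℝ)+1) * θ n k)

def X₀ (n : ℕ) : Matrix (Fin n) (Fin n) ℝ :=
  Matrix.of fun i j =>
    if (i : ℕ) + 1 = (j : ℕ) ∨ (j : ℕ) + 1 = (i : ℕ) then 1 else 0

variable (n : ℕ)

lemma sin_succ_n (k : Fin n) : Real.sin ((((n:ℕ)+1 : ℕ):ℝ) * θ n k) = 0 := by
  have h : (((n:ℕ)+1 : ℕ):ℝ) * θ n k = ((k:ℕ)+1 : ℕ) * Real.pi := by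
    unfold θ
    have hn : ((n:ℝ)+1) ≠ 0 := by positivity
    push_cast
    field_simp
  rw [h, Real.sin_nat_mul_pi]

lemma S₀_mul_S₀ : S₀ n * S₀ n = (((n:ℝ)+1)/2) • (1 : Matrix (Fin n) (Fin n) ℝ) := by
  ext j k
  rw [Matrix.mul_apply]
  have h1 : ∀ l : Fin n, S₀ n j l = Real.sin ((((l:ℕ):ℝ)+1) * θ n (j:ℕ)) := by
    intro l
    unfold S₀ θ
    simp only [Matrix.of_apply]
    congr 1
    ring
  calc ∑ l : Fin n, S₀ n j l * S₀ n l k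
      = ∑ l : Fin n, Real.sin ((((l:ℕ):ℝ)+1) * θ n (j:ℕ))
          * Real.sin ((((l:ℕ):ℝ)+1) * θ n (k:ℕ)) :=
        Finset.sum_congr rfl fun l _ => by rw [h1 l]; rfl
    _ = ∑ l ∈ Finset.range n, Real.sin (((l:ℝ)+1) * θ n (j:ℕ))
          * Real.sin (((l:ℝ)+1) * θ n (k:ℕ)) :=
        Fin.sum_univ_eq_sum_range
          (fun l : ℕ => Real.sin (((l:ℝ)+1) * θ n (j:ℕ))
            * Real.sin (((l:ℝ)+1) * θ n (k:ℕ))) n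
    _ = if (j:ℕ) = (k:ℕ) then ((n:ℝ)+1)/2 else 0 := by
        have h := ortho n j k j.2 k.2
        unfold θ
        exact h
    _ = ((((n:ℝ)+1)/2) • (1 : Matrix (Fin n) (Fin n) ℝ)) j k := by
        rw [Matrix.smul_apply, Matrix.one_apply]
        by_cases h : j = k
        · rw [if_pos (by rw [h]), if_pos h, smul_eq_mul, mul_one]
        · rw [if_neg (by simpa [Fin.val_inj] using h), if_neg h, smul_eq_mul, mul_zero]

lemma X₀_mul_S₀ : X₀ n * S₀ n
    = S₀ n * Matrix.diagonal (fun k : Fin n => 2 * Real.cos (θ n k)) := by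
  ext j k
  rw [Matrix.mul_apply, Matrix.mul_diagonal]
  set s : ℕ → ℝ := fun m => Real.sin ((m:ℝ) * θ n (k:ℕ)) with hs
  have h1 : ∀ l : Fin n, X₀ n j l * S₀ n l k
      = (if (j:ℕ)+1 = (l:ℕ) then s ((l:ℕ)+1) else 0)
        + (if (l:ℕ)+1 = (j:ℕ) then s ((l:ℕ)+1) else 0) := by
    intro l
    have hns : ¬((j:ℕ)+1 = (l:ℕ) ∧ (l:ℕ)+1 = (j:ℕ)) := by omega
    unfold X₀ S₀
    simp only [Matrix.of_apply]
    have harg : Real.sin ((((l:ℕ):ℝ)+1) * θ n (k:ℕ)) = s ((l:ℕ)+1) := by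
      rw [hs]; push_cast; ring_nf
    by_cases hp : (j:ℕ)+1 = (l:ℕ) <;> by_cases hq : (l:ℕ)+1 = (j:ℕ)
    · exact absurd ⟨hp, hq⟩ hns
    · rw [if_pos (Or.inl hp), if_pos hp, if_neg hq, harg]; ring
    · rw [if_pos (Or.inr hq), if_neg hp, if_pos hq, harg]; ring
    · rw [if_neg (by tauto), if_neg hp, if_neg hq]; ring
  rw [Finset.sum_congr rfl fun l _ => h1 l, Finset.sum_add_distrib]
  have e1 : (∑ l : Fin n, if (j:ℕ)+1 = (l:ℕ) then s ((l:ℕ)+1) else 0)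
      = s ((j:ℕ)+2) := by
    rw [Fin.sum_univ_eq_sum_range (fun m => if (j:ℕ)+1 = m then s (m+1) else 0) n,
      Finset.sum_ite_eq (Finset.range n) ((j:ℕ)+1) (fun m => s (m+1))]
    by_cases hjn : (j:ℕ)+1 < n
    · rw [if_pos (Finset.mem_range.mpr hjn)]
    · have hj : (j:ℕ)+1 = n := by have := j.2; omega
      rw [if_neg (by simp only [Finset.mem_range]; omega)]
      have h0 : s ((j:ℕ)+2) = 0 := by
        rw [show (j:ℕ)+2 = n+1 from by omega]
        exact sin_succ_n n k
      rw [h0]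
  have e2 : (∑ l : Fin n, if (l:ℕ)+1 = (j:ℕ) then s ((l:ℕ)+1) else 0)
      = s (j:ℕ) := by
    rw [Fin.sum_univ_eq_sum_range (fun m => if m+1 = (j:ℕ) then s (m+1) else 0) n]
    cases hj : (j:ℕ) with
    | zero =>
        rw [Finset.sum_eq_zero (fun m _ => if_neg (by omega))]
        rw [hs]; simp
    | succ j' =>
        have hconv : ∀ m ∈ Finset.range n,
            (if m+1 = j'+1 then s (m+1) else 0) = (if j' = m then s (m+1) else 0) := by
          intro m _
          by_cases h : m = j'
          · subst h; rw [if_pos rfl, if_pos rfl]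
          · rw [if_neg (by omega), if_neg (by omega)]
        rw [Finset.sum_congr rfl hconv,
          Finset.sum_ite_eq (Finset.range n) j' (fun m => s (m+1)),
          if_pos (Finset.mem_range.mpr (by have := j.2; omega))]
  rw [e1, e2]
  have hkey := eig (θ n (k:ℕ)) (j:ℕ)
  unfold S₀
  simp only [Matrix.of_apply]
  rw [hs]
  push_cast
  linear_combination hkey

end SchurAux

namespace SchurAux
variable (n : ℕ)

noncomputable def SC : Matrix (Fin n) (Fin n) ℂ := (S₀ n).map Complex.ofRealHom
noncomputable def DC : Matrix (Fin n) (Fin n) ℂ :=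
  (Matrix.diagonal (fun k : Fin n => 2 * Real.cos (θ n k))).map Complex.ofRealHom
noncomputable def AC : Matrix (Fin n) (Fin n) ℂ :=
  (Matrix.diagonal (fun k : Fin n => |2 * Real.cos (θ n k)|)).map Complex.ofRealHom
noncomputable def EC : Matrix (Fin n) (Fin n) ℂ :=
  (Matrix.diagonal (fun k : Fin n => Real.sqrt |2 * Real.cos (θ n k)|)).map Complex.ofRealHom

noncomputable def γ : ℂ := (((n:ℝ)+1)/2 : ℝ)

lemma γ_ne : γ n ≠ 0 := by
  unfold γ
  simp only [ne_eq, Complex.ofReal_eq_zero]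
  positivity

lemma hXmap : schurX₁ n = (X₀ n).map Complex.ofRealHom := by
  ext i j
  simp only [schurX₁, X₀, Matrix.map_apply, Matrix.of_apply]
  split <;> simp

lemma hM1 : schurX₁ n * SC n = SC n * DC n := by
  rw [hXmap, SC, DC, ← Matrix.map_mul, ← Matrix.map_mul, X₀_mul_S₀]

lemma smul_one_map (c : ℝ) :
    ((c • (1 : Matrix (Fin n) (Fin n) ℝ)).map Complex.ofRealHom)
      = (c : ℂ) • (1 : Matrix (Fin n) (Fin n) ℂ) := by
  ext i j
  rw [Matrix.map_apply, Matrix.smul_apply, Matrix.smul_apply, Matrix.one_apply,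
    Matrix.one_apply]
  by_cases h : i = j
  · rw [if_pos h, if_pos h]; simp
  · rw [if_neg h, if_neg h]; simp

lemma hM2 : SC n * SC n = γ n • 1 := by
  rw [SC, ← Matrix.map_mul, S₀_mul_S₀, smul_one_map, γ]

lemma hSh : (SC n)ᴴ = SC n := by
  ext i j
  rw [Matrix.conjTranspose_apply, SC, Matrix.map_apply, Matrix.map_apply]
  have h : S₀ n j i = S₀ n i j := by
    unfold S₀ θ
    simp only [Matrix.of_apply]
    congr 1
    ring
  rw [h]
  simp [Complex.ofRealHom_eq_coe, Complex.conj_ofReal]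

lemma hXh : (schurX₁ n)ᴴ = schurX₁ n := by
  ext i j
  simp only [schurX₁, Matrix.conjTranspose_apply, Matrix.of_apply, apply_ite (star : ℂ → ℂ),
    star_one, star_zero]
  by_cases h : (i:ℕ)+1 = (j:ℕ) ∨ (j:ℕ)+1 = (i:ℕ)
  · rw [if_pos h.symm, if_pos h]
  · rw [if_neg (fun hc => h hc.symm), if_neg h]

lemma hEh : (EC n)ᴴ = EC n := by
  rw [EC, Matrix.diagonal_map (map_zero _), Matrix.diagonal_conjTranspose]
  have h : star (fun m : Fin n => (Complex.ofRealHom (Real.sqrt |2 * Real.cos (θ n m)|)))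
      = fun m : Fin n => Complex.ofRealHom (Real.sqrt |2 * Real.cos (θ n m)|) := by
    funext m
    rw [Pi.star_apply]
    simp [Complex.star_def, Complex.conj_ofReal]
  rw [h]

lemma hE2 : EC n * EC n = AC n := by
  have h : (fun k : Fin n => Real.sqrt |2*Real.cos (θ n k)| * Real.sqrt |2*Real.cos (θ n k)|)
      = fun k : Fin n => |2 * Real.cos (θ n k)| := by
    funext k
    exact Real.mul_self_sqrt (abs_nonneg _)
  rw [EC, ← Matrix.map_mul, Matrix.diagonal_mul_diagonal, h, AC]

lemma hAA : AC n * AC n = DC n * DC n := by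
  have h : (fun k : Fin n => |2 * Real.cos (θ n k)| * |2 * Real.cos (θ n k)|)
      = fun k : Fin n => 2 * Real.cos (θ n k) * (2 * Real.cos (θ n k)) := by
    funext k
    exact abs_mul_abs_self _
  rw [AC, DC, ← Matrix.map_mul, ← Matrix.map_mul, Matrix.diagonal_mul_diagonal,
    Matrix.diagonal_mul_diagonal, h]

lemma smul_PSD (t : ℝ) (ht : 0 ≤ t) {A : Matrix (Fin n) (Fin n) ℂ}
    (hA : A.PosSemidef) : (((t:ℝ):ℂ) • A).PosSemidef := by
  refine ⟨?_, fun x => ?_⟩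
  · rw [Matrix.IsHermitian, Matrix.conjTranspose_smul, hA.1, Complex.star_def,
      Complex.conj_ofReal]
  · exact (hA.smul (a := ((t:ℝ):ℂ)) (by exact_mod_cast ht)).2 x

noncomputable def BC : Matrix (Fin n) (Fin n) ℂ :=
  (((((n:ℝ)+1)/2)⁻¹ : ℝ) : ℂ) • (SC n * AC n * SC n)

lemma BC_psd : (BC n).PosSemidef := by
  apply smul_PSD n _ (by positivity)
  have hfact : SC n * AC n * SC n = (SC n * EC n) * (SC n * EC n)ᴴ := by
    rw [Matrix.conjTranspose_mul, hEh, hSh]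
    calc SC n * AC n * SC n = SC n * (EC n * EC n) * SC n := by rw [hE2]
      _ = SC n * EC n * (EC n * SC n) := by simp only [Matrix.mul_assoc]
  rw [hfact]
  exact Matrix.posSemidef_self_mul_conjTranspose _

lemma sandwich_sq (M : Matrix (Fin n) (Fin n) ℂ) :
    (SC n * M * SC n) * (SC n * M * SC n) = γ n • (SC n * (M * M) * SC n) := by
  calc (SC n * M * SC n) * (SC n * M * SC n)
      = SC n * (M * ((SC n * SC n) * (M * SC n))) := by
        simp only [Matrix.mul_assoc]
    _ = γ n • (SC n * (M * M) * SC n) := by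
        rw [hM2, Matrix.smul_mul, Matrix.one_mul, Matrix.mul_smul, Matrix.mul_smul]
        simp only [Matrix.mul_assoc]

lemma X_fact : schurX₁ n = (γ n)⁻¹ • (SC n * DC n * SC n) := by
  have h : schurX₁ n * SC n * SC n = SC n * DC n * SC n := by rw [hM1]
  rw [Matrix.mul_assoc, hM2, Matrix.mul_smul, Matrix.mul_one] at h
  rw [← h, smul_smul, inv_mul_cancel₀ (γ_ne n), one_smul]

lemma inv_ofReal : ((((((n:ℝ)+1)/2)⁻¹ : ℝ)) : ℂ) = (γ n)⁻¹ := by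
  rw [γ, Complex.ofReal_inv]

lemma XX_eq : (schurX₁ n)ᴴ * schurX₁ n = (γ n)⁻¹ • (SC n * (DC n * DC n) * SC n) := by
  rw [hXh, X_fact, Matrix.smul_mul, Matrix.mul_smul, smul_smul, sandwich_sq, smul_smul]
  congr 1
  field_simp

lemma BC_sq : BC n ^ 2 = (schurX₁ n)ᴴ * schurX₁ n := by
  rw [sq, BC, inv_ofReal, Matrix.smul_mul, Matrix.mul_smul, smul_smul, sandwich_sq,
    smul_smul, hAA, XX_eq]
  congr 1
  field_simp

end SchurAux

namespace SchurAux
variable (n : ℕ)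

lemma trace_eq : (SC n * AC n * SC n).trace
    = γ n * (∑ k : Fin n, ((|2 * Real.cos (θ n k)| : ℝ) : ℂ)) := by
  rw [Matrix.trace_mul_cycle, hM2, Matrix.smul_mul, Matrix.one_mul, Matrix.trace_smul,
    AC, Matrix.diagonal_map (map_zero _), Matrix.trace_diagonal, smul_eq_mul]
  push_cast [Complex.ofRealHom_eq_coe]
  try ring

lemma BC_trace : (BC n).trace = ∑ k : Fin n, ((|2*Real.cos (θ n k)| : ℝ) : ℂ) := by
  rw [BC, Matrix.trace_smul, trace_eq, inv_ofReal, smul_eq_mul, ← mul_assoc,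
    inv_mul_cancel₀ (γ_ne n), one_mul]

lemma tsq (t : ℝ) : (((t:ℝ):ℂ) • BC n)^2
    = (((t:ℝ):ℂ) • schurX₁ n)ᴴ * (((t:ℝ):ℂ) • schurX₁ n) := by
  rw [Matrix.conjTranspose_smul, Complex.star_def, Complex.conj_ofReal, smul_pow,
    BC_sq, Matrix.smul_mul, Matrix.mul_smul, smul_smul]
  congr 1
  ring

open scoped MatrixOrder in
lemma tn (t : ℝ) (ht : 0 ≤ t) :
    traceNorm (((t:ℝ):ℂ) • schurX₁ n)
      = 2 * t * ∑ k : Fin n, |Real.cos (θ n k)| := by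
  have hs : CFC.sqrt ((((t:ℝ):ℂ) • schurX₁ n)ᴴ * (((t:ℝ):ℂ) • schurX₁ n))
      = ((t:ℝ):ℂ) • BC n := by
    apply CFC.sqrt_unique _ (smul_PSD n t ht (BC_psd n)).nonneg
    rw [← sq]; exact tsq n t
  have hP := Matrix.posSemidef_conjTranspose_mul_self (((t:ℝ):ℂ) • schurX₁ n)
  have hT : traceNorm (((t:ℝ):ℂ) • schurX₁ n)
      = (CFC.sqrt ((((t:ℝ):ℂ) • schurX₁ n)ᴴ * (((t:ℝ):ℂ) • schurX₁ n))).trace.re := by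
    rw [CFC.sqrt_eq_real_sqrt _ hP.nonneg, cfcₙ_eq_cfc (by fun_prop) Real.sqrt_zero, hP.1.cfc_eq]
    rfl
  rw [hT, hs, Matrix.trace_smul, smul_eq_mul, BC_trace]
  rw [show (∑ k : Fin n, ((|2*Real.cos (θ n k)| : ℝ) : ℂ))
      = (((∑ k : Fin n, |2*Real.cos (θ n k)|) : ℝ) : ℂ) by push_cast; rfl]
  rw [← Complex.ofReal_mul, Complex.ofReal_re]
  have h2 : (∑ k : Fin n, |2*Real.cos (θ n k)|)
      = 2 * ∑ k : Fin n, |Real.cos (θ n k)| := by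
    rw [Finset.mul_sum]
    refine Finset.sum_congr rfl fun k _ => ?_
    rw [abs_mul]
    norm_num
  rw [h2]
  ring

lemma hHad (t : ℝ) : Matrix.hadamard (schurA n t) (schurX₁ n) = ((t:ℝ):ℂ) • schurX₁ n := by
  ext i j
  rw [Matrix.hadamard_apply, Matrix.smul_apply]
  simp only [schurA, schurX₁, Matrix.of_apply]
  by_cases hij : i = j
  · have hc : ¬((i:ℕ)+1 = (j:ℕ) ∨ (j:ℕ)+1 = (i:ℕ)) := by
      subst hij; omega
    rw [if_pos hij, if_neg hc, mul_zero, smul_zero]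
  · rw [if_neg hij]
    by_cases hc : ((i:ℕ)+1 = (j:ℕ) ∨ (j:ℕ)+1 = (i:ℕ))
    · rw [if_pos hc, if_pos hc, mul_one, smul_eq_mul, mul_one]
    · rw [if_neg hc, if_neg hc, mul_zero, smul_zero]

end SchurAux

open SchurAux

/-- For the Schur-product dynamical map `Λ_t(X) = A_t ∘ X` (`t ∈ [0,1/2]`), one
has `‖Λ_t(X₁)‖₁ = 2t Σ |cos(kπ/(n+1))|`, strictly increasing in `t`; hence
`{Λ_t}` is not P-divisible. -/
theorem schur_dynamical_map_not_pDivisible (n : ℕ) (hn : 2 ≤ n) :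
    (∀ t ∈ Set.Icc (0 : ℝ) (1 / 2),
      traceNorm (Matrix.hadamard (schurA n t) (schurX₁ n)) =
        2 * t * ∑ k : Fin n, |Real.cos (((k : ℕ) + 1) * Real.pi / (n + 1))|) ∧
    StrictMonoOn (fun t : ℝ => traceNorm (Matrix.hadamard (schurA n t) (schurX₁ n)))
      (Set.Icc (0 : ℝ) (1 / 2)) ∧
    ¬ (∀ s t : ℝ, 0 ≤ s → s ≤ t → t ≤ 1 / 2 →
        ∃ Φ : Matrix (Fin n) (Fin n) ℂ →ₗ[ℂ] Matrix (Fin n) (Fin n) ℂ,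
          (∀ A : Matrix (Fin n) (Fin n) ℂ, A.PosSemidef → (Φ A).PosSemidef) ∧
          (∀ A : Matrix (Fin n) (Fin n) ℂ, (Φ A).trace = A.trace) ∧
          ∀ X : Matrix (Fin n) (Fin n) ℂ,
            Matrix.hadamard (schurA n t) X = Φ (Matrix.hadamard (schurA n s) X)) := by
  have hform : ∀ t ∈ Set.Icc (0 : ℝ) (1 / 2),
      traceNorm (Matrix.hadamard (schurA n t) (schurX₁ n)) =
        2 * t * ∑ k : Fin n, |Real.cos (((k : ℕ) + 1) * Real.pi / (n + 1))| := by
    intro t htIcc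
    rw [hHad n t, tn n t htIcc.1]
    rfl
  refine ⟨hform, ?_, ?_⟩
  · have hC : 0 < ∑ k : Fin n, |Real.cos (((k:ℕ) + 1) * Real.pi / (n + 1))| := by
      have hk0 : (⟨0, by omega⟩ : Fin n) ∈ Finset.univ := Finset.mem_univ _
      refine Finset.sum_pos' (fun k _ => abs_nonneg _) ⟨⟨0, by omega⟩, hk0, ?_⟩
      rw [abs_pos]
      refine ne_of_gt (Real.cos_pos_of_mem_Ioo ⟨?_, ?_⟩)
      · have h1 : (0:ℝ) < ((0:ℕ)+1) * Real.pi / (n+1) := by positivity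
        have := Real.pi_pos
        linarith
      · have hn3 : (3:ℝ) ≤ (n:ℝ)+1 := by
          have : (2:ℝ) ≤ (n:ℝ) := by exact_mod_cast hn
          linarith
        rw [div_lt_iff₀ (by linarith)]
        have := Real.pi_pos
        push_cast
        nlinarith
    intro a ha b hb hab
    simp only
    rw [hform a ha, hform b hb]
    nlinarith [hC, hab]
  · intro h
    obtain ⟨Φ, hpos, htr, hcomm⟩ := h 0 (1/2) le_rfl (by norm_num) (le_refl _)
    have h12 := hcomm (schurX₁ n)
    rw [hHad n 0, hHad n (1/2)] at h12
    simp only [Complex.ofReal_zero, zero_smul, map_zero] at h12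
    have hentry := congrFun (congrFun h12 ⟨0, by omega⟩) ⟨1, by omega⟩
    simp only [Matrix.smul_apply, schurX₁, Matrix.of_apply, Matrix.zero_apply] at hentry
    norm_num at hentry
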